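/- With the notation of the ESP map, if s₀ lies in the interior of ℰ and the roots of P_{s₀} are all simple, then the largest root λ₁(s) is a continuously differentiable function of s in a neighborhood of s₀, and the diameter of {λ₁(s) : ‖s − s₀‖_∞ ≤ ε} is at least cε + o(ε) for some c > 0 as ε → 0. -/

import Mathlib

open scoped Topology
open Filter Asymptotics Polynomial

/-- The polynomial `P_s(λ) = λ^d + ∑_{k=1}^d (-1)^k s_k λ^{d-k}` as a function,
with `s_k = s ⟨k-1⟩` for `k = 1, …, d`. -/
noncomputable def Pfun (d : ℕ) (s : Fin d → ℝ) (x : ℝ) : ℝ :=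
  x ^ d + ∑ i : Fin d, (-1 : ℝ) ^ (i.1 + 1) * s i * x ^ (d - 1 - i.1)

/-- The set of ESP vectors: those `s` for which `P_s` splits over ℝ. -/
def ESPset (d : ℕ) : Set (Fin d → ℝ) :=
  {s | ∃ r : Fin d → ℝ, ∀ x, Pfun d s x = ∏ i, (x - r i)}

/-- `a` is the largest real root of `P_s`. -/
def IsMaxRoot (d : ℕ) (s : Fin d → ℝ) (a : ℝ) : Prop :=
  Pfun d s a = 0 ∧ ∀ x, Pfun d s x = 0 → x ≤ a

private lemma contDiff_G (d : ℕ) :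
    ContDiff ℝ 1 (fun p : (Fin d → ℝ) × ℝ => Pfun d p.1 p.2) := by
  unfold Pfun
  apply ContDiff.add
  · exact contDiff_snd.pow d
  · apply ContDiff.sum; intro i _
    exact (contDiff_const.mul
      (((ContinuousLinearMap.proj i : (Fin d → ℝ) →L[ℝ] ℝ).contDiff).comp contDiff_fst)).mul
      (contDiff_snd.pow _)

private noncomputable def Amap (d : ℕ) (ρ : ℝ) : (Fin d → ℝ) →L[ℝ] ℝ :=
  ∑ i : Fin d, ((-1 : ℝ) ^ (i.1 + 1) * ρ ^ (d - 1 - i.1)) •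
    (ContinuousLinearMap.proj i : (Fin d → ℝ) →L[ℝ] ℝ)

private lemma Amap_apply (d : ℕ) (ρ : ℝ) (v : Fin d → ℝ) :
    Amap d ρ v = ∑ i : Fin d, (-1 : ℝ) ^ (i.1 + 1) * ρ ^ (d - 1 - i.1) * v i := by
  simp [Amap, ContinuousLinearMap.sum_apply, mul_comm]

private lemma hasFDerivAt_section (d : ℕ) (ρ : ℝ) (s₀ : Fin d → ℝ) :
    HasFDerivAt (fun s => Pfun d s ρ) (Amap d ρ) s₀ := by
  have h : (fun s : Fin d → ℝ => Pfun d s ρ) = fun s => ρ ^ d + Amap d ρ s := by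
    funext s; rw [Amap_apply]; unfold Pfun; congr 1
    exact Finset.sum_congr rfl fun i _ => by ring
  rw [h]
  exact ((Amap d ρ).hasFDerivAt).const_add _

private lemma hasDerivAt_prodroots {d : ℕ} (r : Fin d → ℝ) (hr : Function.Injective r)
    (i : Fin d) :
    HasDerivAt (fun y => ∏ j : Fin d, (y - r j))
      (∏ j ∈ Finset.univ.erase i, (r i - r j)) (r i) := by
  have h := HasDerivAt.fun_finsetProd (u := Finset.univ) (f := fun j y => y - r j)
    (f' := fun _ => 1) (x := r i) (fun j _ => (hasDerivAt_id (r i)).sub_const (r j))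
  have hv : (∑ j : Fin d, (∏ k ∈ Finset.univ.erase j, (r i - r k)) • (1 : ℝ))
      = ∏ j ∈ Finset.univ.erase i, (r i - r j) := by
    rw [Finset.sum_eq_single i]
    · simp
    · intro j _ hj
      have hmem : i ∈ Finset.univ.erase j := Finset.mem_erase.mpr ⟨(Ne.symm hj), Finset.mem_univ _⟩
      rw [Finset.prod_eq_zero hmem (by simp)]
      simp
    · simp
  rw [← hv]
  exact h

private lemma prodroots_ne_zero {d : ℕ} (r : Fin d → ℝ) (hr : Function.Injective r) (i : Fin d) :
    (∏ j ∈ Finset.univ.erase i, (r i - r j)) ≠ 0 := by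
  apply Finset.prod_ne_zero_iff.mpr
  intro j hj
  have : j ≠ i := (Finset.mem_erase.mp hj).1
  exact sub_ne_zero.mpr fun h => this (hr h.symm)

private lemma root_eq_of_roots {d : ℕ} (hd : 0 < d) (s : Fin d → ℝ) (f : Fin d → ℝ)
    (hroot : ∀ i, Pfun d s (f i) = 0) (hinj : Function.Injective f)
    (x : ℝ) (hx : Pfun d s x = 0) : ∃ i, x = f i := by
  set q : ℝ[X] := X ^ d + ∑ i : Fin d, C ((-1 : ℝ) ^ (i.1 + 1) * s i) * X ^ (d - 1 - i.1) with hq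
  have heval : ∀ y : ℝ, q.eval y = Pfun d s y := by
    intro y
    simp [hq, Pfun, eval_finset_sum, mul_assoc]
  have hdegsum : (∑ i : Fin d, C ((-1 : ℝ) ^ (i.1 + 1) * s i) * X ^ (d - 1 - i.1)).degree
      < (d : WithBot ℕ) := by
    refine lt_of_le_of_lt (Polynomial.degree_sum_le _ _) ?_
    rw [Finset.sup_lt_iff (by exact_mod_cast WithBot.bot_lt_coe d)]
    intro i _
    refine lt_of_le_of_lt (degree_C_mul_X_pow_le _ _) ?_
    exact_mod_cast (by omega : d - 1 - i.1 < d)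
  have hdeg : q.degree = d := by
    rw [hq, degree_add_eq_left_of_degree_lt (by rwa [degree_X_pow]), degree_X_pow]
  have hq0 : q ≠ 0 := fun h => by simp [h] at hdeg
  have hnat : q.natDegree = d := natDegree_eq_of_degree_eq_some hdeg
  have himage : (Finset.univ.image f) ⊆ q.roots.toFinset := by
    intro y hy
    obtain ⟨i, _, rfl⟩ := Finset.mem_image.mp hy
    rw [Multiset.mem_toFinset, mem_roots hq0]
    exact (heval (f i)).trans (hroot i)
  have hcard : q.roots.toFinset.card ≤ (Finset.univ.image f).card := by
    have h1 : q.roots.toFinset.card ≤ q.roots.card := q.roots.toFinset_card_le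
    have h2 : q.roots.card ≤ d := hnat ▸ q.card_roots'
    have h3 : (Finset.univ.image f).card = d := by
      rw [Finset.card_image_of_injective _ hinj, Finset.card_univ, Fintype.card_fin]
    omega
  have heq := Finset.eq_of_subset_of_card_le himage hcard
  have hxmem : x ∈ q.roots.toFinset := by
    rw [Multiset.mem_toFinset, mem_roots hq0]
    exact (heval x).trans hx
  rw [← heq] at hxmem
  obtain ⟨i, _, hfi⟩ := Finset.mem_image.mp hxmem
  exact ⟨i, hfi.symm⟩

private lemma exists_root_fun (d : ℕ) (hd : 0 < d) (s₀ : Fin d → ℝ) (r : Fin d → ℝ)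
    (hr : Function.Injective r)
    (hP : ∀ x, Pfun d s₀ x = ∏ i, (x - r i)) (i : Fin d) :
    ∃ Λ : (Fin d → ℝ) → ℝ, ContDiffAt ℝ 1 Λ s₀ ∧ Λ s₀ = r i ∧
      (∀ᶠ s in 𝓝 s₀, Pfun d s (Λ s) = 0) ∧
      ∀ D : (Fin d → ℝ) →L[ℝ] ℝ, HasFDerivAt Λ D s₀ →
        D (Pi.single (⟨d - 1, by omega⟩ : Fin d) 1) ≠ 0 := by
  classical
  set G : (Fin d → ℝ) × ℝ → ℝ := fun p => Pfun d p.1 p.2 with hGdef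
  set pt : (Fin d → ℝ) × ℝ := (s₀, r i) with hptdef
  have hGc : ContDiff ℝ 1 G := contDiff_G d
  set L₀ : ((Fin d → ℝ) × ℝ) →L[ℝ] ℝ := fderiv ℝ G pt with hL₀def
  have hG : HasFDerivAt G L₀ pt :=
    ((hGc.differentiable one_ne_zero).differentiableAt).hasFDerivAt
  -- the partial derivative in x is the product of root differences
  have hmk : HasDerivAt (fun x : ℝ => ((s₀, x) : (Fin d → ℝ) × ℝ))
      (((0 : Fin d → ℝ), (1 : ℝ))) (r i) :=
    (hasDerivAt_const _ _).prodMk (hasDerivAt_id _)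
  have hx : HasDerivAt (fun x => G (s₀, x)) (L₀ ((0 : Fin d → ℝ), (1 : ℝ))) (r i) :=
    hG.comp_hasDerivAt _ hmk
  have hxeq : (fun x => G (s₀, x)) = fun y => ∏ j : Fin d, (y - r j) := by
    funext y; exact hP y
  rw [hxeq] at hx
  have hb : L₀ ((0 : Fin d → ℝ), (1 : ℝ)) = ∏ j ∈ Finset.univ.erase i, (r i - r j) :=
    hx.unique (hasDerivAt_prodroots r hr i)
  set b : ℝ := L₀ ((0 : Fin d → ℝ), (1 : ℝ)) with hbdef
  have hbne : b ≠ 0 := by rw [hb]; exact prodroots_ne_zero r hr i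
  -- linearity decomposition
  have key : ∀ (v : Fin d → ℝ) (t : ℝ), L₀ (v, t) = L₀ (v, 0) + t * b := by
    intro v t
    have hvt : ((v, t) : (Fin d → ℝ) × ℝ) = (v, 0) + t • ((0 : Fin d → ℝ), (1 : ℝ)) := by
      simp [Prod.ext_iff]
    rw [hvt, map_add, map_smul, smul_eq_mul]
  -- the partial derivative in s
  have hA : L₀.comp ((ContinuousLinearMap.id ℝ (Fin d → ℝ)).prod 0) = Amap d (r i) := by
    have hinner : HasFDerivAt (fun s : Fin d → ℝ => ((s, r i) : (Fin d → ℝ) × ℝ))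
        ((ContinuousLinearMap.id ℝ (Fin d → ℝ)).prod 0) s₀ :=
      (hasFDerivAt_id s₀).prodMk (hasFDerivAt_const _ _)
    have h1 : HasFDerivAt (fun s : Fin d → ℝ => G (s, r i))
        (L₀.comp ((ContinuousLinearMap.id ℝ (Fin d → ℝ)).prod 0)) s₀ := by have := hG.comp s₀ hinner; exact this
    exact h1.unique (hasFDerivAt_section d (r i) s₀)
  set e : Fin d → ℝ := Pi.single (⟨d - 1, by omega⟩ : Fin d) 1 with hedef
  have hAe : L₀ (e, 0) = (-1 : ℝ) ^ d := by
    have h2 : L₀ (e, 0) = Amap d (r i) e := by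
      have := congrArg (fun T : (Fin d → ℝ) →L[ℝ] ℝ => T e) hA
      simpa using this
    rw [h2, Amap_apply]
    rw [Finset.sum_eq_single (⟨d - 1, by omega⟩ : Fin d)]
    · simp only [hedef, Pi.single_eq_same, mul_one, Nat.sub_self, pow_zero, mul_one]
      congr 1
      omega
    · intro j _ hj
      rw [hedef, Pi.single_eq_of_ne hj, mul_zero]
    · simp
  have hAene : L₀ (e, 0) ≠ 0 := by
    rw [hAe]; exact pow_ne_zero _ (by norm_num)
  -- the equivalence
  set H : (Fin d → ℝ) × ℝ → (Fin d → ℝ) × ℝ := fun p => (p.1, G p) with hHdef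
  set H' : ((Fin d → ℝ) × ℝ) →L[ℝ] ((Fin d → ℝ) × ℝ) :=
    (ContinuousLinearMap.fst ℝ (Fin d → ℝ) ℝ).prod L₀ with hH'def
  set M : ((Fin d → ℝ) × ℝ) →L[ℝ] ((Fin d → ℝ) × ℝ) :=
    (ContinuousLinearMap.fst ℝ (Fin d → ℝ) ℝ).prod
      (b⁻¹ • ((ContinuousLinearMap.snd ℝ (Fin d → ℝ) ℝ) -
        L₀.comp ((ContinuousLinearMap.inl ℝ (Fin d → ℝ) ℝ).comp
          (ContinuousLinearMap.fst ℝ (Fin d → ℝ) ℝ)))) with hMdef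
  have hMapp : ∀ q : (Fin d → ℝ) × ℝ, M q = (q.1, b⁻¹ * (q.2 - L₀ (q.1, 0))) := by
    intro q; simp [hMdef]
  have h₁ : Function.LeftInverse M H' := by
    intro p
    rw [hMapp]
    have : H' p = (p.1, L₀ p) := by simp [hH'def]
    rw [this]
    have : L₀ p = L₀ (p.1, 0) + p.2 * b := by
      have := key p.1 p.2; simpa using this
    rw [this]
    field_simp
    simp [hbne]
  have h₂ : Function.RightInverse M H' := by
    intro q
    rw [hMapp]
    have : H' (q.1, b⁻¹ * (q.2 - L₀ (q.1, 0))) =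
        (q.1, L₀ (q.1, b⁻¹ * (q.2 - L₀ (q.1, 0)))) := by simp [hH'def]
    rw [this, key]
    have : L₀ (q.1, 0) + b⁻¹ * (q.2 - L₀ (q.1, 0)) * b = q.2 := by field_simp; ring
    rw [this]
  set Eqv : ((Fin d → ℝ) × ℝ) ≃L[ℝ] ((Fin d → ℝ) × ℝ) :=
    ContinuousLinearEquiv.equivOfInverse H' M h₁ h₂ with hEqvdef
  have hHc : ContDiffAt ℝ 1 H pt := (contDiff_fst.prodMk hGc).contDiffAt
  have hHd : HasFDerivAt H (Eqv : ((Fin d → ℝ) × ℝ) →L[ℝ] ((Fin d → ℝ) × ℝ)) pt := by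
    have h : HasFDerivAt H H' pt := (hasFDerivAt_fst).prodMk hG
    convert h using 1
    rfl
  set inv := hHc.localInverse hHd one_ne_zero with hinvdef
  have hGpt : G pt = 0 := by
    show Pfun d s₀ (r i) = 0
    rw [hP]
    exact Finset.prod_eq_zero (Finset.mem_univ i) (sub_self _)
  have hHpt : H pt = (s₀, 0) := by
    rw [hHdef]; simp [hptdef, hGpt, show G (s₀, r i) = 0 from hGpt]
  set Λ : (Fin d → ℝ) → ℝ := fun s => (inv (s, 0)).2 with hΛdef
  have hval : Λ s₀ = r i := by
    have h := hHc.localInverse_apply_image hHd one_ne_zero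
    rw [hHpt] at h
    show (inv (s₀, 0)).2 = r i
    rw [← hinvdef] at h
    rw [h]
  have hcd : ContDiffAt ℝ 1 Λ s₀ := by
    have hinvc : ContDiffAt ℝ 1 inv (H pt) := hHc.to_localInverse hHd one_ne_zero
    rw [hHpt] at hinvc
    have hf : ContDiffAt ℝ 1 (fun s : Fin d → ℝ => ((s, (0 : ℝ)) : (Fin d → ℝ) × ℝ)) s₀ :=
      contDiffAt_id.prodMk contDiffAt_const
    exact ContDiffAt.comp s₀ contDiffAt_snd (ContDiffAt.comp s₀ hinvc hf)
  have hev : ∀ᶠ s in 𝓝 s₀, H (inv (s, 0)) = (s, 0) := by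
    have hre : ∀ᶠ y in 𝓝 (H pt), H (inv y) = y :=
      (hHc.hasStrictFDerivAt' hHd one_ne_zero).eventually_right_inverse
    have htends : Tendsto (fun s : Fin d → ℝ => ((s, (0 : ℝ)) : (Fin d → ℝ) × ℝ))
        (𝓝 s₀) (𝓝 (H pt)) := by
      rw [hHpt]
      exact (continuous_id.prodMk continuous_const).tendsto s₀
    exact htends.eventually hre
  have hroot : ∀ᶠ s in 𝓝 s₀, Pfun d s (Λ s) = 0 := by
    filter_upwards [hev] with s hs
    have h1 : (inv (s, 0)).1 = s := congrArg Prod.fst hs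
    have h2 : G (inv (s, 0)) = 0 := congrArg Prod.snd hs
    have h3 : Pfun d ((inv (s, 0)).1) ((inv (s, 0)).2) = 0 := h2
    rw [h1] at h3
    exact h3
  refine ⟨Λ, hcd, hval, hroot, ?_⟩
  intro D hD
  have hpteq : ((fun s : Fin d → ℝ => ((s, Λ s) : (Fin d → ℝ) × ℝ)) s₀) = pt := by
    simp [hval, hptdef]
  have hinner : HasFDerivAt (fun s : Fin d → ℝ => ((s, Λ s) : (Fin d → ℝ) × ℝ))
      ((ContinuousLinearMap.id ℝ (Fin d → ℝ)).prod D) s₀ := (hasFDerivAt_id s₀).prodMk hD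
  have hcomp : HasFDerivAt (fun s : Fin d → ℝ => G (s, Λ s))
      (L₀.comp ((ContinuousLinearMap.id ℝ (Fin d → ℝ)).prod D)) s₀ := by
    have hG' : HasFDerivAt G L₀ ((fun s : Fin d → ℝ => ((s, Λ s) : (Fin d → ℝ) × ℝ)) s₀) := by
      rw [hpteq]; exact hG
    exact hG'.comp s₀ hinner
  have hzero : HasFDerivAt (fun s : Fin d → ℝ => G (s, Λ s))
      (0 : (Fin d → ℝ) →L[ℝ] ℝ) s₀ := by
    have hc : HasFDerivAt (fun _ : Fin d → ℝ => (0 : ℝ)) (0 : (Fin d → ℝ) →L[ℝ] ℝ) s₀ :=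
      hasFDerivAt_const _ _
    apply hc.congr_of_eventuallyEq
    filter_upwards [hroot] with s hs
    exact hs
  have huniq : L₀.comp ((ContinuousLinearMap.id ℝ (Fin d → ℝ)).prod D) = 0 :=
    hcomp.unique hzero
  intro hDe
  have h3 : L₀ (e, D e) = 0 := by
    have := congrArg (fun T : (Fin d → ℝ) →L[ℝ] ℝ => T e) huniq
    simpa using this
  rw [key, hDe, zero_mul, add_zero] at h3
  exact hAene h3

/-- If `s₀` is interior to `ℰ` and `P_{s₀}` has `d` distinct real roots, then the largest root is
a C¹ function of `s` near `s₀`, and the diameter of the set of largest roots over the ε-ball is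
at least `cε + o(ε)`. -/
theorem stmt16 (d : ℕ) (hd : 0 < d) (s₀ : Fin d → ℝ) (hint : s₀ ∈ interior (ESPset d))
    (hsimple : ∃ r : Fin d → ℝ, StrictAnti r ∧ ∀ x, Pfun d s₀ x = ∏ i, (x - r i)) :
    ∃ V ∈ 𝓝 s₀, ∃ Λ : (Fin d → ℝ) → ℝ,
      ContDiffOn ℝ 1 Λ V ∧ (∀ s ∈ V, IsMaxRoot d s (Λ s)) ∧
      ∃ c > 0, ∃ o : ℝ → ℝ, (o =o[𝓝[>] (0:ℝ)] fun ε => ε) ∧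
        ∀ᶠ ε in 𝓝[>] (0:ℝ),
          c * ε + o ε ≤ Metric.diam (Λ '' Metric.closedBall s₀ ε) := by
  classical
  obtain ⟨r, hr, hP⟩ := hsimple
  have hrinj : Function.Injective r := hr.injective
  choose Λs hΛcd hΛval hΛroot hΛder using exists_root_fun d hd s₀ r hrinj hP
  set i₀ : Fin d := ⟨0, hd⟩ with hi₀
  set Λ : (Fin d → ℝ) → ℝ := Λs i₀ with hΛ
  -- eventual ordering
  have hord : ∀ᶠ s in 𝓝 s₀, ∀ i j : Fin d, i < j → Λs j s < Λs i s := by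
    rw [eventually_all]
    intro i
    rw [eventually_all]
    intro j
    by_cases hij : i < j
    · have hlt : Λs j s₀ < Λs i s₀ := by rw [hΛval i, hΛval j]; exact hr hij
      filter_upwards [((hΛcd j).continuousAt).eventually_lt ((hΛcd i).continuousAt) hlt]
        with s hs _
      exact hs
    · filter_upwards with s hcon
      exact absurd hcon hij
  have hroots : ∀ᶠ s in 𝓝 s₀, ∀ i, Pfun d s (Λs i s) = 0 := eventually_all.mpr hΛroot
  obtain ⟨w, hw, hWprop⟩ := eventually_iff_exists_mem.mp (hroots.and hord)
  obtain ⟨u, hu, hcdOn⟩ := (hΛcd i₀).contDiffOn le_rfl (by simp)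
  set V := u ∩ w with hV
  have hVnhds : V ∈ 𝓝 s₀ := Filter.inter_mem hu hw
  refine ⟨V, hVnhds, Λ, hcdOn.mono Set.inter_subset_left, ?_, ?_⟩
  · -- max root property
    intro s hs
    obtain ⟨h1, h2⟩ := hWprop s hs.2
    have hinj : Function.Injective fun i => Λs i s := by
      intro a b hab
      have hab' : Λs a s = Λs b s := hab
      by_contra hne
      rcases lt_or_gt_of_ne hne with h | h
      · exact absurd hab' (h2 a b h).ne'
      · exact absurd hab' (h2 b a h).ne
    refine ⟨h1 i₀, ?_⟩
    intro x hx
    obtain ⟨i, rfl⟩ := root_eq_of_roots hd s (fun i => Λs i s) h1 hinj x hx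
    rcases eq_or_ne i i₀ with h | h
    · rw [h]
    · have : i₀ < i := by
        rw [hi₀]
        exact Fin.lt_iff_val_lt_val.mpr (Nat.pos_of_ne_zero (fun h0 => h (Fin.ext h0)))
      exact (h2 i₀ i this).le
  · -- asymptotics
    set k : Fin d := ⟨d - 1, by omega⟩ with hk
    set e : Fin d → ℝ := Pi.single k 1 with he
    have hnorme : ‖e‖ = 1 := by rw [he, Pi.norm_single, norm_one]
    have hdiffΛ : DifferentiableAt ℝ Λ s₀ := (hΛcd i₀).differentiableAt one_ne_zero
    set D := fderiv ℝ Λ s₀ with hD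
    have hDf : HasFDerivAt Λ D s₀ := hdiffΛ.hasFDerivAt
    set γ : ℝ := D e with hγ
    have hγne : γ ≠ 0 := hΛder i₀ D hDf
    -- derivative of φ
    have hplus : HasDerivAt (fun t : ℝ => Λ (s₀ + t • e)) γ 0 := by
      have hin : HasDerivAt (fun t : ℝ => s₀ + t • e) e 0 := by
        simpa using ((hasDerivAt_id (0 : ℝ)).smul_const e).const_add s₀
      have hΛ' : HasFDerivAt Λ D ((fun t : ℝ => s₀ + t • e) 0) := by
        simpa using hDf
      exact hΛ'.comp_hasDerivAt 0 hin
    have hminus : HasDerivAt (fun t : ℝ => Λ (s₀ - t • e)) (-γ) 0 := by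
      have hin : HasDerivAt (fun t : ℝ => s₀ - t • e) (-e) 0 := by
        simpa using ((hasDerivAt_id (0 : ℝ)).smul_const e).const_sub s₀
      have hΛ' : HasFDerivAt Λ D ((fun t : ℝ => s₀ - t • e) 0) := by
        simpa using hDf
      have := hΛ'.comp_hasDerivAt 0 hin
      rw [map_neg] at this
      exact this
    set φ : ℝ → ℝ := fun t => Λ (s₀ + t • e) - Λ (s₀ - t • e) with hφ
    have hφd : HasDerivAt φ (2 * γ) 0 := by
      have := hplus.sub hminus
      have h2 : γ - -γ = 2 * γ := by ring
      rwa [h2] at this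
    have hφ0 : φ 0 = 0 := by simp [hφ]
    have hlo : (fun t => φ t - t * (2 * γ)) =o[𝓝 (0 : ℝ)] fun t => t := by
      have h := hφd.isLittleO
      simpa [hφ0, smul_eq_mul, mul_comm] using h
    set c : ℝ := 2 * |γ| with hc
    have hcpos : 0 < c := by positivity
    set o : ℝ → ℝ := fun ε => |φ ε| - c * ε with ho
    have hoo : o =o[𝓝[>] (0 : ℝ)] fun ε => ε := by
      have h1 : (fun t => φ t - t * (2 * γ)) =o[𝓝[>] (0 : ℝ)] (fun t : ℝ => t) :=
        hlo.mono nhdsWithin_le_nhds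
      refine IsBigO.trans_isLittleO ?_ h1
      rw [isBigO_iff]
      refine ⟨1, ?_⟩
      filter_upwards [self_mem_nhdsWithin] with ε (hε : (0 : ℝ) < ε)
      have habs : c * ε = |ε * (2 * γ)| := by
        rw [abs_mul, abs_of_pos hε, abs_mul]
        simp [hc]
        ring
      rw [ho]
      simp only [Real.norm_eq_abs, one_mul]
      calc |(|φ ε| - c * ε)| = |(|φ ε| - |ε * (2 * γ)|)| := by rw [habs]
        _ ≤ |φ ε - ε * (2 * γ)| := abs_abs_sub_abs_le_abs_sub _ _
    refine ⟨c, hcpos, o, hoo, ?_⟩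
    obtain ⟨ε₀, hε₀pos, hball⟩ := Metric.nhds_basis_closedBall.mem_iff.mp hVnhds
    filter_upwards [Ioc_mem_nhdsGT_of_mem ⟨le_rfl, hε₀pos⟩] with ε hε
    obtain ⟨hεpos, hεle⟩ := hε
    have hsub : Metric.closedBall s₀ ε ⊆ V :=
      (Metric.closedBall_subset_closedBall hεle).trans hball
    have hmemp : s₀ + ε • e ∈ Metric.closedBall s₀ ε := by
      rw [Metric.mem_closedBall, dist_eq_norm]
      simp only [add_sub_cancel_left]
      rw [norm_smul, hnorme, Real.norm_eq_abs, abs_of_pos hεpos, mul_one]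
    have hmemm : s₀ - ε • e ∈ Metric.closedBall s₀ ε := by
      rw [Metric.mem_closedBall, dist_eq_norm]
      simp only [sub_sub_cancel_left, norm_neg]
      rw [norm_smul, hnorme, Real.norm_eq_abs, abs_of_pos hεpos, mul_one]
    have hbdd : Bornology.IsBounded (Λ '' Metric.closedBall s₀ ε) := by
      apply IsCompact.isBounded
      apply (isCompact_closedBall s₀ ε).image_of_continuousOn
      exact ((hcdOn.mono Set.inter_subset_left).continuousOn).mono hsub
    have hdist : dist (Λ (s₀ + ε • e)) (Λ (s₀ - ε • e))
        ≤ Metric.diam (Λ '' Metric.closedBall s₀ ε) :=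
      Metric.dist_le_diam_of_mem hbdd (Set.mem_image_of_mem Λ hmemp)
        (Set.mem_image_of_mem Λ hmemm)
    have heq : c * ε + o ε = dist (Λ (s₀ + ε • e)) (Λ (s₀ - ε • e)) := by
      rw [Real.dist_eq, ho]
      show c * ε + (|φ ε| - c * ε) = |φ ε|
      ring
    rw [heq]
    exact hdist
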